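/- There exists an entrywise nonnegative matrix A of rank 3 that admits no nonnegative factorization A = W Hᵀ with W ∈ ℝ^{d×3} ≥ 0 and H ∈ ℝ^{n×3} ≥ 0, i.e., the nonnegative rank of A can exceed its rank. -/

import Mathlib

open Matrix

noncomputable def Amat : Matrix (Fin 4) (Fin 4) ℝ := !![1,1,0,0; 1,0,0,1; 0,1,1,0; 0,0,1,1]
noncomputable def Xmat : Matrix (Fin 3) (Fin 4) ℝ := !![1,0,0,0; 0,1,0,0; 0,0,1,0]
noncomputable def Ymat : Matrix (Fin 4) (Fin 3) ℝ := !![0,1,0; 1,-1,0; -1,1,1; 0,0,0]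
noncomputable def Bmat : Matrix (Fin 4) (Fin 3) ℝ := !![1,0,0; 0,1,0; 0,0,1; -1,1,1]
noncomputable def Cmat : Matrix (Fin 3) (Fin 4) ℝ := !![1,1,0,0; 1,0,0,1; 0,1,1,0]

def eS : Fin 8 → Fin 4 × Fin 4 := ![(0,0),(0,1),(1,0),(1,3),(2,1),(2,2),(3,2),(3,3)]
def Pmat : Matrix (Fin 4) (Fin 4) Bool :=
  !![true,true,false,false; true,false,false,true; false,true,true,false; false,false,true,true]

lemma no_triple : ¬ ∃ a b c : Fin 8, a ≠ b ∧ a ≠ c ∧ b ≠ c ∧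
    Pmat (eS a).1 (eS b).2 ∧ Pmat (eS b).1 (eS a).2 ∧ Pmat (eS a).1 (eS c).2 ∧
    Pmat (eS c).1 (eS a).2 ∧ Pmat (eS b).1 (eS c).2 ∧ Pmat (eS c).1 (eS b).2 := by decide

lemma hXAY : Xmat * Amat * Ymat = 1 := by
  ext i j
  fin_cases i <;> fin_cases j <;>
    simp [Xmat, Amat, Ymat, Matrix.mul_apply, Fin.sum_univ_four, Matrix.one_apply]

lemma hBC : Amat = Bmat * Cmat := by
  ext i j
  fin_cases i <;> fin_cases j <;>
    simp [Amat, Bmat, Cmat, Matrix.mul_apply, Fin.sum_univ_three, Matrix.vecHead, Matrix.vecTail]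

lemma rankA : Amat.rank = 3 := by
  refine le_antisymm ?_ ?_
  · calc Amat.rank = (Bmat * Cmat).rank := by rw [hBC]
      _ ≤ Bmat.rank := rank_mul_le_left Bmat Cmat
      _ ≤ 3 := by simpa using Bmat.rank_le_card_width
  · calc (3:ℕ) = (1 : Matrix (Fin 3) (Fin 3) ℝ).rank := by simp [rank_one]
      _ = (Xmat * Amat * Ymat).rank := by rw [hXAY]
      _ ≤ (Xmat * Amat).rank := rank_mul_le_left _ _
      _ ≤ Amat.rank := rank_mul_le_right _ _

lemma hP : ∀ i j, 0 < Amat i j → Pmat i j = true := by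
  intro i j
  fin_cases i <;> fin_cases j <;> simp [Amat, Pmat, Matrix.vecHead, Matrix.vecTail]

lemma hPos : ∀ a : Fin 8, 0 < Amat (eS a).1 (eS a).2 := by
  intro a; fin_cases a <;> norm_num [Amat, eS, Matrix.vecHead, Matrix.vecTail, Matrix.cons_val_two, Matrix.cons_val_three]

/-- There is an entrywise nonnegative matrix of rank 3 admitting no nonnegative
factorization `W Hᵀ` with inner dimension 3: nonnegative rank can exceed rank. -/
theorem stmt13 : ∃ (d n : ℕ) (A : Matrix (Fin d) (Fin n) ℝ),
    (∀ i j, 0 ≤ A i j) ∧ A.rank = 3 ∧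
    ¬ ∃ (W : Matrix (Fin d) (Fin 3) ℝ) (H : Matrix (Fin n) (Fin 3) ℝ),
      (∀ i j, 0 ≤ W i j) ∧ (∀ i j, 0 ≤ H i j) ∧ A = W * Hᵀ := by
  refine ⟨4, 4, Amat, ?_, rankA, ?_⟩
  · intro i j; fin_cases i <;> fin_cases j <;> norm_num [Amat]
  rintro ⟨W, H, hW, hH, hA⟩
  have hentry : ∀ i j, Amat i j = ∑ k, W i k * H j k := by
    intro i j; rw [hA]; simp [Matrix.mul_apply]
  have hc0 : ∀ a : Fin 8, ∃ k, 0 < W (eS a).1 k ∧ 0 < H (eS a).2 k := by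
    intro a
    have h0 := hPos a
    rw [hentry] at h0
    obtain ⟨k, _, hk⟩ := Finset.exists_ne_zero_of_sum_ne_zero (ne_of_gt h0)
    have hkpos : 0 < W (eS a).1 k * H (eS a).2 k :=
      lt_of_le_of_ne (mul_nonneg (hW _ _) (hH _ _)) (Ne.symm hk)
    refine ⟨k, ?_, ?_⟩
    · rcases lt_or_eq_of_le (hW (eS a).1 k) with h | h
      · exact h
      · rw [← h, zero_mul] at hkpos; exact absurd hkpos (lt_irrefl 0)
    · rcases lt_or_eq_of_le (hH (eS a).2 k) with h | h
      · exact h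
      · rw [← h, mul_zero] at hkpos; exact absurd hkpos (lt_irrefl 0)
  choose c hc using hc0
  have key : ∀ a b : Fin 8, c a = c b → Pmat (eS a).1 (eS b).2 = true := by
    intro a b hab
    apply hP
    rw [hentry]
    refine Finset.sum_pos' (fun k _ => mul_nonneg (hW _ _) (hH _ _))
      ⟨c a, Finset.mem_univ _, mul_pos (hc a).1 (by rw [hab]; exact (hc b).2)⟩
  have pig : ∃ k ∈ (Finset.univ : Finset (Fin 3)),
      2 < (Finset.univ.filter fun a : Fin 8 => c a = k).card := by
    apply Finset.exists_lt_card_fiber_of_mul_lt_card_of_maps_to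
    · intro a _; exact Finset.mem_univ _
    · simp
  obtain ⟨k, -, hk2⟩ := pig
  rw [Finset.two_lt_card_iff] at hk2
  obtain ⟨a, b, d, ha, hb, hd, hab, had, hbd⟩ := hk2
  simp only [Finset.mem_filter] at ha hb hd
  exact no_triple ⟨a, b, d, hab, had, hbd,
    key a b (ha.2.trans hb.2.symm), key b a (hb.2.trans ha.2.symm),
    key a d (ha.2.trans hd.2.symm), key d a (hd.2.trans ha.2.symm),
    key b d (hb.2.trans hd.2.symm), key d b (hd.2.trans hb.2.symm)⟩
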